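/- Fix d ∈ (0,2) and set ζ_{d,r} = d(2−d)(4−d)⋯(2r−2−d)/(2^r r!). For a positive integer k define ζ_k(y) = Σ_{r=1}^∞ ζ_{d,r}·(y^{2r}/(1·3⋯(2r−1)))·((k+1)(k+3)⋯(k+2r−1)/(k+y²)^r), a convergent series for every y ∈ ℝ. Then for every fixed y ∈ ℝ, lim_{k→∞} ζ_k(y) = Σ_{r=1}^∞ ζ_{d,r}·y^{2r}/(1·3⋯(2r−1)). -/

import Mathlib

open Filter Real Topology Finset

noncomputable def zA (d : ℝ) (r : ℕ) : ℝ :=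
  (d * ∏ i ∈ Finset.range r, (2 * ((i : ℝ) + 1) - d)) /
    (2 ^ (r + 1) * (Nat.factorial (r + 1) : ℝ))

noncomputable def zfac (y c : ℝ) (i : ℕ) : ℝ :=
  y ^ 2 * (c + 2 * (i : ℝ) + 1) / ((2 * (i : ℝ) + 1) * (c + y ^ 2))

lemma zA_nonneg {d : ℝ} (hd : d ∈ Set.Ioo (0 : ℝ) 2) (r : ℕ) : 0 ≤ zA d r := by
  obtain ⟨hd0, hd2⟩ := hd
  apply div_nonneg
  · apply mul_nonneg hd0.le
    apply Finset.prod_nonneg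
    intro i _
    have : (0:ℝ) ≤ (i:ℝ) := Nat.cast_nonneg i
    nlinarith
  · positivity

lemma zA_succ_le {d : ℝ} (hd : d ∈ Set.Ioo (0 : ℝ) 2) (r : ℕ) : zA d (r + 1) ≤ zA d r := by
  obtain ⟨hd0, hd2⟩ := hd
  have h1 : zA d (r + 1) = zA d r * ((2 * ((r : ℝ) + 1) - d) / (2 * ((r : ℕ) + 2 : ℕ))) := by
    unfold zA
    rw [Finset.prod_range_succ]
    have hf : (Nat.factorial (r + 2) : ℝ) = ((r + 2 : ℕ) : ℝ) * (Nat.factorial (r + 1) : ℝ) := by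
      rw [Nat.factorial_succ]; push_cast; ring
    rw [hf]
    have h2 : ((r:ℕ) + 2 : ℕ) ≠ 0 := by omega
    field_simp
    ring
  rw [h1]
  have hle : (2 * ((r : ℝ) + 1) - d) / (2 * ((r : ℕ) + 2 : ℕ)) ≤ 1 := by
    rw [div_le_one (by positivity)]
    push_cast; nlinarith
  have h0 : 0 ≤ (2 * ((r : ℝ) + 1) - d) / (2 * ((r : ℕ) + 2 : ℕ)) := by
    apply div_nonneg _ (by positivity)
    nlinarith [Nat.cast_nonneg (α := ℝ) r]
  nlinarith [zA_nonneg ⟨hd0, hd2⟩ r]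

lemma term_eq (d y c : ℝ) (r : ℕ) :
    zA d r * (y ^ (2 * (r + 1)) / ∏ i ∈ Finset.range (r + 1), (2 * (i : ℝ) + 1)) *
      ((∏ i ∈ Finset.range (r + 1), (c + 2 * (i : ℝ) + 1)) / (c + y ^ 2) ^ (r + 1)) =
    zA d r * ∏ i ∈ Finset.range (r + 1), zfac y c i := by
  unfold zfac
  rw [Finset.prod_div_distrib, Finset.prod_mul_distrib, Finset.prod_mul_distrib,
    Finset.prod_const, Finset.prod_const, Finset.card_range, pow_mul,
    mul_assoc, div_mul_div_comm]

lemma zfac_nonneg {y c : ℝ} (hc : 0 ≤ c) (i : ℕ) : 0 ≤ zfac y c i := by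
  have hi : (0:ℝ) ≤ (i:ℝ) := Nat.cast_nonneg i
  have h1 : (0:ℝ) ≤ y ^ 2 := sq_nonneg y
  unfold zfac
  apply div_nonneg (by nlinarith) (by nlinarith)

lemma summable_A_prod {d : ℝ} (hd : d ∈ Set.Ioo (0 : ℝ) 2) (b : ℕ → ℝ)
    (hb0 : ∀ i, 0 ≤ b i) {ρ : ℝ} (hρ1 : ρ < 1)
    (hev : ∀ᶠ j in atTop, b j ≤ ρ) :
    Summable (fun r : ℕ => zA d r * ∏ i ∈ Finset.range (r + 1), b i) := by
  apply summable_of_ratio_norm_eventually_le hρ1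
  obtain ⟨N, hN⟩ := eventually_atTop.mp hev
  rw [eventually_atTop]
  refine ⟨N, fun r hr => ?_⟩
  have hP : 0 ≤ ∏ i ∈ Finset.range (r + 1), b i :=
    Finset.prod_nonneg fun i _ => hb0 i
  have hterm : ∀ s : ℕ, 0 ≤ zA d s * ∏ i ∈ Finset.range (s + 1), b i :=
    fun s => mul_nonneg (zA_nonneg hd s) (Finset.prod_nonneg fun i _ => hb0 i)
  rw [Real.norm_eq_abs, Real.norm_eq_abs, abs_of_nonneg (hterm (r + 1)), abs_of_nonneg (hterm r)]
  have hb' : b (r + 1) ≤ ρ := hN (r + 1) (by omega)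
  have hρ0 : 0 ≤ ρ := le_trans (hb0 (r + 1)) hb'
  calc zA d (r + 1) * ∏ i ∈ Finset.range (r + 2), b i
      = zA d (r + 1) * ((∏ i ∈ Finset.range (r + 1), b i) * b (r + 1)) := by
        rw [Finset.prod_range_succ]
    _ ≤ zA d r * ((∏ i ∈ Finset.range (r + 1), b i) * ρ) := by
        apply mul_le_mul (zA_succ_le hd r)
          (mul_le_mul_of_nonneg_left hb' hP)
          (mul_nonneg hP (hb0 _)) (zA_nonneg hd r)
    _ = ρ * (zA d r * ∏ i ∈ Finset.range (r + 1), b i) := by ring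

lemma zfac_le_rho {y c : ℝ} (hc : 0 < c) (j : ℕ) (hj : 2 * y ^ 2 ≤ 2 * (j : ℝ) + 1) :
    zfac y c j ≤ (c + 2 * y ^ 2) / (2 * (c + y ^ 2)) := by
  have hj0 : (0:ℝ) ≤ (j:ℝ) := Nat.cast_nonneg j
  have hcy : (0:ℝ) < c + y ^ 2 := by nlinarith [sq_nonneg y]
  unfold zfac
  rw [div_le_div_iff₀ (by nlinarith) (by nlinarith)]
  nlinarith [mul_nonneg (mul_nonneg hc.le hcy.le) (by linarith : (0:ℝ) ≤ 2 * (j:ℝ) + 1 - 2 * y ^ 2)]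

lemma zfac_le_b {y c : ℝ} (hc1 : 1 ≤ c) (hcy : y ^ 2 ≤ c) (i : ℕ) :
    zfac y c i ≤ (2 * y ^ 2 + (2 * (i : ℝ) + 1)) / (2 * (2 * (i : ℝ) + 1)) := by
  have hi : (0:ℝ) ≤ (i:ℝ) := Nat.cast_nonneg i
  have hy : (0:ℝ) ≤ y ^ 2 := sq_nonneg y
  unfold zfac
  rw [div_le_div_iff₀ (by nlinarith) (by nlinarith)]
  nlinarith [mul_nonneg (mul_nonneg (by linarith : (0:ℝ) ≤ 2*(i:ℝ)+1) (by linarith : (0:ℝ) ≤ 2*(i:ℝ)+1)) (sub_nonneg.2 hcy),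
    mul_nonneg (by linarith : (0:ℝ) ≤ 2*(i:ℝ)+1) (mul_nonneg hy hy)]

lemma tendsto_ratio (a b : ℝ) (hb : 0 ≤ b) :
    Tendsto (fun k : ℕ => ((k : ℝ) + a) / ((k : ℝ) + b)) atTop (𝓝 1) := by
  have h1 : Tendsto (fun k : ℕ => (k : ℝ) + b) atTop atTop :=
    tendsto_atTop_add_const_right _ b tendsto_natCast_atTop_atTop
  have h0 : Tendsto (fun k : ℕ => 1 + (a - b) * ((k : ℝ) + b)⁻¹) atTop (𝓝 1) := by
    have := (h1.inv_tendsto_atTop).const_mul (a - b)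
    simpa using this.const_add 1
  apply h0.congr'
  filter_upwards [eventually_ge_atTop 1] with k hk
  have hk1 : (1:ℝ) ≤ (k:ℝ) := by exact_mod_cast hk
  have hne : (k:ℝ) + b ≠ 0 := by positivity
  field_simp
  ring

lemma tendsto_zfac (y : ℝ) (i : ℕ) :
    Tendsto (fun k : ℕ => zfac y (k : ℝ) i) atTop (𝓝 (y ^ 2 / (2 * (i : ℝ) + 1))) := by
  have heq : ∀ k : ℕ, zfac y (k : ℝ) i
      = y ^ 2 / (2 * (i : ℝ) + 1) * (((k : ℝ) + (2 * (i : ℝ) + 1)) / ((k : ℝ) + y ^ 2)) := by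
    intro k
    unfold zfac
    rw [div_mul_div_comm]
    ring_nf
  have := (tendsto_ratio (2 * (i : ℝ) + 1) (y ^ 2) (sq_nonneg y)).const_mul
    (y ^ 2 / (2 * (i : ℝ) + 1))
  simp only [mul_one] at this
  exact this.congr fun k => (heq k).symm

/-- The Student-t zeta function `ζ_k` converges pointwise to the Gaussian zeta function
`ζ_∞` as `k → ∞`: the series defining `ζ_k(y)` is convergent for every `y`, and for every
fixed `y`, `ζ_k(y) → Σ_{r≥1} ζ_{d,r} y^{2r}/(1·3⋯(2r-1))`.  (Sums are indexed by `r ∈ ℕ`,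
corresponding to the term of index `r + 1 ≥ 1`.) -/
theorem t_zeta_tendsto_gaussian_zeta (d : ℝ) (hd : d ∈ Set.Ioo (0 : ℝ) 2) :
    (∀ k : ℕ, 1 ≤ k → ∀ y : ℝ, Summable (fun r : ℕ =>
      (d * ∏ i ∈ Finset.range r, (2 * ((i : ℝ) + 1) - d)) /
          (2 ^ (r + 1) * (Nat.factorial (r + 1) : ℝ)) *
        (y ^ (2 * (r + 1)) / ∏ i ∈ Finset.range (r + 1), (2 * (i : ℝ) + 1)) *
        ((∏ i ∈ Finset.range (r + 1), ((k : ℝ) + 2 * (i : ℝ) + 1)) /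
          ((k : ℝ) + y ^ 2) ^ (r + 1)))) ∧
    (∀ y : ℝ, Tendsto
      (fun k : ℕ => ∑' r : ℕ,
        (d * ∏ i ∈ Finset.range r, (2 * ((i : ℝ) + 1) - d)) /
            (2 ^ (r + 1) * (Nat.factorial (r + 1) : ℝ)) *
          (y ^ (2 * (r + 1)) / ∏ i ∈ Finset.range (r + 1), (2 * (i : ℝ) + 1)) *
          ((∏ i ∈ Finset.range (r + 1), ((k : ℝ) + 2 * (i : ℝ) + 1)) /
            ((k : ℝ) + y ^ 2) ^ (r + 1)))
      atTop
      (𝓝 (∑' r : ℕ,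
        (d * ∏ i ∈ Finset.range r, (2 * ((i : ℝ) + 1) - d)) /
            (2 ^ (r + 1) * (Nat.factorial (r + 1) : ℝ)) *
          (y ^ (2 * (r + 1)) / ∏ i ∈ Finset.range (r + 1), (2 * (i : ℝ) + 1))))) := by
  constructor
  · -- Summability for each k ≥ 1
    intro k hk y
    have hk1 : (1 : ℝ) ≤ (k : ℝ) := by exact_mod_cast hk
    have hkpos : (0 : ℝ) < (k : ℝ) := by linarith
    have hρ1 : ((k : ℝ) + 2 * y ^ 2) / (2 * ((k : ℝ) + y ^ 2)) < 1 := by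
      rw [div_lt_one (by nlinarith [sq_nonneg y])]
      nlinarith [sq_nonneg y]
    have hev : ∀ᶠ j in atTop, zfac y (k : ℝ) j
        ≤ ((k : ℝ) + 2 * y ^ 2) / (2 * ((k : ℝ) + y ^ 2)) := by
      filter_upwards [eventually_ge_atTop ⌈y ^ 2⌉₊] with j hj
      have hj2 : y ^ 2 ≤ (j : ℝ) := le_trans (Nat.le_ceil _) (by exact_mod_cast hj)
      exact zfac_le_rho hkpos j (by linarith)
    have hsum := (summable_A_prod hd (zfac y (k : ℝ))
      (fun i => zfac_nonneg hkpos.le i) hρ1 hev).congr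
      (fun r => (term_eq d y (k : ℝ) r).symm)
    exact hsum
  · -- Pointwise convergence of the sums
    intro y
    set b : ℕ → ℝ := fun i => (2 * y ^ 2 + (2 * (i : ℝ) + 1)) / (2 * (2 * (i : ℝ) + 1)) with hbdef
    have hb0 : ∀ i, 0 ≤ b i := fun i => by
      have hi : (0:ℝ) ≤ (i:ℝ) := Nat.cast_nonneg i
      apply div_nonneg <;> nlinarith [sq_nonneg y]
    have hbsum : Summable (fun r : ℕ => zA d r * ∏ i ∈ Finset.range (r + 1), b i) := by
      apply summable_A_prod hd b hb0 (ρ := 3 / 4) (by norm_num)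
      filter_upwards [eventually_ge_atTop ⌈2 * y ^ 2⌉₊] with j hj
      have hj2 : 2 * y ^ 2 ≤ (j : ℝ) := le_trans (Nat.le_ceil _) (by exact_mod_cast hj)
      have hi : (0:ℝ) ≤ (j:ℝ) := Nat.cast_nonneg j
      rw [hbdef, div_le_iff₀ (by nlinarith)]
      nlinarith
    have main : Tendsto
        (fun k : ℕ => ∑' r : ℕ, zA d r *
          (y ^ (2 * (r + 1)) / ∏ i ∈ Finset.range (r + 1), (2 * (i : ℝ) + 1)) *
          ((∏ i ∈ Finset.range (r + 1), ((k : ℝ) + 2 * (i : ℝ) + 1)) /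
            ((k : ℝ) + y ^ 2) ^ (r + 1)))
        atTop
        (𝓝 (∑' r : ℕ, zA d r *
          (y ^ (2 * (r + 1)) / ∏ i ∈ Finset.range (r + 1), (2 * (i : ℝ) + 1)))) := by
      apply tendsto_tsum_of_dominated_convergence hbsum
      · -- pointwise limits
        intro r
        have hprod := tendsto_finset_prod (Finset.range (r + 1))
          (fun i (_ : i ∈ Finset.range (r + 1)) => tendsto_zfac y i)
        have hL : (∏ i ∈ Finset.range (r + 1), (y ^ 2 / (2 * (i : ℝ) + 1)))
            = y ^ (2 * (r + 1)) / ∏ i ∈ Finset.range (r + 1), (2 * (i : ℝ) + 1) := by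
          rw [Finset.prod_div_distrib, Finset.prod_const, Finset.card_range, pow_mul]
        have := hprod.const_mul (zA d r)
        rw [hL] at this
        exact this.congr (fun k => (term_eq d y (k : ℝ) r).symm)
      · -- uniform bound
        filter_upwards [eventually_ge_atTop (⌈y ^ 2⌉₊ + 1)] with k hk
        intro r
        have hk1 : (1 : ℝ) ≤ (k : ℝ) := by
          have : 1 ≤ k := by omega
          exact_mod_cast this
        have hky : y ^ 2 ≤ (k : ℝ) := by
          have h1 : (⌈y ^ 2⌉₊ : ℝ) ≤ (k : ℝ) := by exact_mod_cast le_trans (Nat.le_succ _) hk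
          exact le_trans (Nat.le_ceil _) h1
        rw [term_eq d y (k : ℝ) r, Real.norm_eq_abs, abs_of_nonneg
          (mul_nonneg (zA_nonneg hd r)
            (Finset.prod_nonneg fun i _ => zfac_nonneg (by linarith) i))]
        exact mul_le_mul_of_nonneg_left
          (Finset.prod_le_prod (fun i _ => zfac_nonneg (by linarith) i)
            (fun i _ => zfac_le_b hk1 hky i))
          (zA_nonneg hd r)
    exact main
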